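/- Slow-switching limit of the flux: for each r > 0 let (v₀ʳ, v₁ʳ) be a solution of the insect-respiration BVP at rate r and let F(r) = D·((v₀ʳ)'(0) + (v₁ʳ)'(0)). Then F(r) → ρ·D·c/L as r → 0⁺, i.e. in the slow-switching limit the mean flux converges to the proportion-weighted average ρ·(Dc/L) of the fluxes of the static open and closed problems. -/

import Mathlib

open Real Filter Set

lemma flux_formula (L D c ρ r : ℝ) (hL : 0 < L) (hD : 0 < D)
    (hρ0 : 0 < ρ) (hρ1 : ρ < 1) (hr : 0 < r)
    (f g : ℝ → ℝ) (a b : ℝ) (ha : a < 0) (hb : L < b)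
    (hf : ContDiffOn ℝ 2 f (Set.Ioo a b)) (hg : ContDiffOn ℝ 2 g (Set.Ioo a b))
    (hode0 : ∀ x ∈ Set.Icc (0:ℝ) L, D * deriv (deriv f) x = (1-ρ)*r*f x - ρ*r*g x)
    (hode1 : ∀ x ∈ Set.Icc (0:ℝ) L, D * deriv (deriv g) x = ρ*r*g x - (1-ρ)*r*f x)
    (hb0 : f 0 = 0) (hb1 : g 0 = 0) (hb2 : deriv g L = 0) (hb3 : f L = ρ * c) :
    D * (deriv f 0 + deriv g 0) =
      D*ρ*c*(Real.sqrt (r/D) * Real.cosh (Real.sqrt (r/D) * L)) /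
        (ρ*L*Real.sqrt (r/D)*Real.cosh (Real.sqrt (r/D)*L)
          + (1-ρ)*Real.sinh (Real.sqrt (r/D)*L)) := by
  set k := Real.sqrt (r/D) with hkdef
  have hk : 0 < k := Real.sqrt_pos.2 (div_pos hr hD)
  have hk2 : k^2 = r/D := Real.sq_sqrt (le_of_lt (div_pos hr hD))
  have ho : IsOpen (Set.Ioo a b) := isOpen_Ioo
  have hsub : Set.Icc (0:ℝ) L ⊆ Set.Ioo a b :=
    fun x hx => ⟨lt_of_lt_of_le ha hx.1, lt_of_le_of_lt hx.2 hb⟩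
  -- basic differentiability
  have hdf : ∀ x ∈ Set.Ioo a b, HasDerivAt f (deriv f x) x := fun x hx =>
    ((hf.differentiableOn (by norm_num)).differentiableAt (ho.mem_nhds hx)).hasDerivAt
  have hdg : ∀ x ∈ Set.Ioo a b, HasDerivAt g (deriv g x) x := fun x hx =>
    ((hg.differentiableOn (by norm_num)).differentiableAt (ho.mem_nhds hx)).hasDerivAt
  have hf' : ContDiffOn ℝ 1 (deriv f) (Set.Ioo a b) :=
    hf.deriv_of_isOpen ho (by norm_num)
  have hg' : ContDiffOn ℝ 1 (deriv g) (Set.Ioo a b) :=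
    hg.deriv_of_isOpen ho (by norm_num)
  have hdf' : ∀ x ∈ Set.Ioo a b, HasDerivAt (deriv f) (deriv (deriv f) x) x := fun x hx =>
    ((hf'.differentiableOn (by norm_num)).differentiableAt (ho.mem_nhds hx)).hasDerivAt
  have hdg' : ∀ x ∈ Set.Ioo a b, HasDerivAt (deriv g) (deriv (deriv g) x) x := fun x hx =>
    ((hg'.differentiableOn (by norm_num)).differentiableAt (ho.mem_nhds hx)).hasDerivAt
  -- combinations
  set w : ℝ → ℝ := fun x => f x + g x with hw
  set w' : ℝ → ℝ := fun x => deriv f x + deriv g x with hw'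
  set z : ℝ → ℝ := fun x => (1-ρ)*f x - ρ*g x with hz
  set z' : ℝ → ℝ := fun x => (1-ρ)*deriv f x - ρ*deriv g x with hz'
  have hwd : ∀ x ∈ Set.Icc (0:ℝ) L, HasDerivAt w (w' x) x := fun x hx =>
    (hdf x (hsub hx)).add (hdg x (hsub hx))
  have hzd : ∀ x ∈ Set.Icc (0:ℝ) L, HasDerivAt z (z' x) x := fun x hx =>
    ((hdf x (hsub hx)).const_mul (1-ρ)).sub ((hdg x (hsub hx)).const_mul ρ)
  have hw'd : ∀ x ∈ Set.Icc (0:ℝ) L, HasDerivAt w' 0 x := by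
    intro x hx
    have h := (hdf' x (hsub hx)).add (hdg' x (hsub hx))
    refine h.congr_deriv (Eq.symm ?_)
    have e0 := hode0 x hx
    have e1 := hode1 x hx
    have hDne : D ≠ 0 := ne_of_gt hD
    have h2 : D * (deriv (deriv f) x + deriv (deriv g) x) = 0 := by
      linear_combination e0 + e1
    rcases mul_eq_zero.mp h2 with h | h
    · exact absurd h hDne
    · linarith
  have hz'd : ∀ x ∈ Set.Icc (0:ℝ) L, HasDerivAt z' (k^2 * z x) x := by
    intro x hx
    have h := ((hdf' x (hsub hx)).const_mul (1-ρ)).sub ((hdg' x (hsub hx)).const_mul ρ)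
    refine h.congr_deriv (Eq.symm ?_)
    have e0 := hode0 x hx
    have e1 := hode1 x hx
    have hDne : D ≠ 0 := ne_of_gt hD
    have h2 : D * ((1-ρ)*deriv (deriv f) x - ρ*deriv (deriv g) x)
        = r * ((1-ρ)*f x - ρ*g x) := by linear_combination (1-ρ)*e0 - ρ*e1
    simp only [hz]
    rw [hk2]
    field_simp
    linear_combination -h2
  -- conserved quantities for z
  have hcosh : ∀ x : ℝ, HasDerivAt (fun y => Real.cosh (k*y)) (k * Real.sinh (k*x)) x := by
    intro x
    have h := (Real.hasDerivAt_cosh (k*x)).comp x ((hasDerivAt_id x).const_mul k)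
    refine h.congr_deriv (Eq.symm ?_); ring
  have hsinh : ∀ x : ℝ, HasDerivAt (fun y => Real.sinh (k*y)) (k * Real.cosh (k*x)) x := by
    intro x
    have h := (Real.hasDerivAt_sinh (k*x)).comp x ((hasDerivAt_id x).const_mul k)
    refine h.congr_deriv (Eq.symm ?_); ring
  set P : ℝ → ℝ := fun x => z' x * Real.cosh (k*x) - k * z x * Real.sinh (k*x) with hP
  set Q : ℝ → ℝ := fun x => z' x * Real.sinh (k*x) - k * z x * Real.cosh (k*x) with hQ
  have hPd : ∀ x ∈ Set.Icc (0:ℝ) L, HasDerivAt P 0 x := by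
    intro x hx
    have h := ((hz'd x hx).mul (hcosh x)).sub (((hzd x hx).const_mul k).mul (hsinh x))
    refine h.congr_deriv (Eq.symm ?_); ring
  have hQd : ∀ x ∈ Set.Icc (0:ℝ) L, HasDerivAt Q 0 x := by
    intro x hx
    have h := ((hz'd x hx).mul (hsinh x)).sub (((hzd x hx).const_mul k).mul (hcosh x))
    refine h.congr_deriv (Eq.symm ?_); ring
  have hconst : ∀ (F : ℝ → ℝ), (∀ x ∈ Set.Icc (0:ℝ) L, HasDerivAt F 0 x) → F L = F 0 := by
    intro F hF
    have hcont : ContinuousOn F (Set.Icc 0 L) := fun x hx =>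
      (hF x hx).continuousAt.continuousWithinAt
    exact constant_of_has_deriv_right_zero hcont
      (fun x hx => (hF x (Set.Ico_subset_Icc_self hx)).hasDerivWithinAt) L
      (Set.right_mem_Icc.2 hL.le)
  have hz0 : z 0 = 0 := by simp [hz, hb0, hb1]
  have hw0 : w 0 = 0 := by simp [hw, hb0, hb1]
  have eqP : z' L * Real.cosh (k*L) - k * z L * Real.sinh (k*L) = z' 0 := by
    have := hconst P hPd
    simpa [hP, hz0] using this
  have eqQ : z' L * Real.sinh (k*L) - k * z L * Real.cosh (k*L) = 0 := by
    have := hconst Q hQd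
    simpa [hQ, hz0] using this
  -- w is linear
  have hw'const : ∀ x ∈ Set.Icc (0:ℝ) L, w' x = w' 0 := by
    intro x hx
    have hcont : ContinuousOn w' (Set.Icc 0 L) := fun y hy =>
      (hw'd y hy).continuousAt.continuousWithinAt
    exact constant_of_has_deriv_right_zero hcont
      (fun y hy => (hw'd y (Set.Ico_subset_Icc_self hy)).hasDerivWithinAt) x hx
  have eqW : w L = w' 0 * L := by
    have hRd : ∀ x ∈ Set.Icc (0:ℝ) L, HasDerivAt (fun y => w y - w' 0 * y) 0 x := by
      intro x hx
      have h := (hwd x hx).sub ((hasDerivAt_id x).const_mul (w' 0))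
      refine h.congr_deriv (Eq.symm ?_)
      rw [hw'const x hx]; ring
    have := hconst _ hRd
    simp only [hw0] at this
    linarith [this]
  -- hyperbolic identity
  have hid : Real.cosh (k*L)^2 - Real.sinh (k*L)^2 = 1 := Real.cosh_sq_sub_sinh_sq (k*L)
  set C := Real.cosh (k*L)
  set S := Real.sinh (k*L)
  have hzL : k * z L = z' 0 * S := by
    linear_combination S*eqP - C*eqQ - (k * z L)*hid
  have hz'L : z' L = z' 0 * C := by
    linear_combination C*eqP - S*eqQ - (z' L)*hid
  -- boundary conditions
  have eq4 : (1-ρ) * w' 0 = z' 0 * C := by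
    have h1 : (0:ℝ) = (1-ρ) * w' L - z' L := by
      simp only [hw', hz', ← hb2]; ring
    have h2 : w' L = w' 0 := hw'const L (Set.right_mem_Icc.2 hL.le)
    linear_combination -h1 + hz'L - (1-ρ)*h2
  have eq5 : ρ * c = ρ * (w' 0 * L) + z L := by
    have h1 : f L = ρ * w L + z L := by simp only [hw, hz]; ring
    rw [hb3, eqW] at h1
    exact h1
  -- positivity of denominator
  have hC : 0 < C := Real.cosh_pos _
  have hS : 0 < S := Real.sinh_pos_iff.2 (mul_pos hk hL)
  have hdenom : 0 < ρ*L*k*C + (1-ρ)*S := by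
    have h1 : 0 < ρ*L*k*C := by positivity
    have h2 : 0 < (1-ρ)*S := mul_pos (by linarith) hS
    linarith
  -- main algebraic identity
  have hm : (w' 0) * (ρ*L*k*C + (1-ρ)*S) = ρ*c*k*C := by
    linear_combination S*eq4 - k*C*eq5 - C*hzL
  have hm0 : deriv f 0 + deriv g 0 = w' 0 := rfl
  rw [hm0, eq_div_iff (ne_of_gt hdenom)]
  linear_combination D * hm

lemma flux_tendsto (L D c ρ : ℝ) (hL : 0 < L) (hD : 0 < D) (hρ0 : 0 < ρ) (hρ1 : ρ < 1) :
    Filter.Tendsto (fun r => D*ρ*c*(Real.sqrt (r/D) * Real.cosh (Real.sqrt (r/D) * L)) /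
        (ρ*L*Real.sqrt (r/D)*Real.cosh (Real.sqrt (r/D)*L)
          + (1-ρ)*Real.sinh (Real.sqrt (r/D)*L)))
      (nhdsWithin 0 (Set.Ioi 0)) (nhds (ρ * D * c / L)) := by
  have hK : Tendsto (fun r => Real.sqrt (r/D)) (nhdsWithin 0 (Set.Ioi 0))
      (nhdsWithin 0 (Set.Ioi 0)) := by
    rw [tendsto_nhdsWithin_iff]
    constructor
    · exact ((Real.continuous_sqrt.comp (continuous_id.div_const D)).tendsto' 0 0
        (by simp)).mono_left nhdsWithin_le_nhds
    · exact eventually_mem_nhdsWithin.mono (fun r hr => Real.sqrt_pos.2 (div_pos hr hD))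
  have hemul : Tendsto (fun k : ℝ => k*L) (nhdsWithin 0 (Set.Ioi 0))
      (nhdsWithin 0 {(0:ℝ)}ᶜ) := by
    rw [tendsto_nhdsWithin_iff]
    constructor
    · exact ((continuous_id.mul continuous_const).tendsto' 0 0 (by simp)).mono_left
        nhdsWithin_le_nhds
    · exact eventually_mem_nhdsWithin.mono (fun k hk => ne_of_gt (mul_pos hk hL))
  have hslope : Tendsto (fun t : ℝ => Real.sinh t / t) (nhdsWithin 0 {(0:ℝ)}ᶜ) (nhds 1) := by
    have h := hasDerivAt_iff_tendsto_slope.mp (Real.hasDerivAt_sinh 0)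
    rw [Real.cosh_zero] at h
    refine h.congr (fun t => ?_)
    simp [slope_def_field, Real.sinh_zero]
  have hratio : Tendsto (fun k : ℝ => Real.sinh (k*L) / (k*L)) (nhdsWithin 0 (Set.Ioi 0))
      (nhds 1) := hslope.comp hemul
  have hcosh0 : Tendsto (fun k : ℝ => Real.cosh (k*L)) (nhdsWithin 0 (Set.Ioi 0)) (nhds 1) := by
    have : Continuous (fun k : ℝ => Real.cosh (k*L)) :=
      Real.continuous_cosh.comp (continuous_id.mul continuous_const)
    exact (this.tendsto' 0 1 (by simp)).mono_left nhdsWithin_le_nhds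
  have hnum : Tendsto (fun k : ℝ => D*ρ*c*Real.cosh (k*L)) (nhdsWithin 0 (Set.Ioi 0))
      (nhds (D*ρ*c*1)) := tendsto_const_nhds.mul hcosh0
  have hden : Tendsto (fun k : ℝ => ρ*L*Real.cosh (k*L) + (1-ρ)*L*(Real.sinh (k*L)/(k*L)))
      (nhdsWithin 0 (Set.Ioi 0)) (nhds (ρ*L*1 + (1-ρ)*L*1)) :=
    (tendsto_const_nhds.mul hcosh0).add (tendsto_const_nhds.mul hratio)
  have hdenne : ρ*L*1 + (1-ρ)*L*1 ≠ 0 := by nlinarith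
  have hG := hnum.div hden hdenne
  have hval : D*ρ*c*1 / (ρ*L*1 + (1-ρ)*L*1) = ρ*D*c/L := by
    have h1 : ρ*L*1 + (1-ρ)*L*1 = L := by ring
    rw [h1]; ring
  rw [hval] at hG
  have hF1 : Tendsto (fun k : ℝ => D*ρ*c*(k * Real.cosh (k * L)) /
      (ρ*L*k*Real.cosh (k*L) + (1-ρ)*Real.sinh (k*L)))
      (nhdsWithin 0 (Set.Ioi 0)) (nhds (ρ*D*c/L)) := by
    refine hG.congr' (eventually_mem_nhdsWithin.mono (fun k hk => ?_))
    have hk : (0:ℝ) < k := hk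
    have hkne : k ≠ 0 := ne_of_gt hk
    have hkL : k * L ≠ 0 := ne_of_gt (mul_pos hk hL)
    have e : ρ*L*Real.cosh (k*L) + (1-ρ)*L*(Real.sinh (k*L)/(k*L))
        = (ρ*L*k*Real.cosh (k*L) + (1-ρ)*Real.sinh (k*L))/k := by
      field_simp
    simp only [Pi.div_apply]
    rw [e, div_div_eq_mul_div]
    congr 1
    ring
  have := hF1.comp hK
  exact this



/-- Slow-switching limit of the flux: if for each `r > 0` the pair
`(v₀ r, v₁ r)` solves the insect-respiration BVP at rate `r`, then the flux
`F r = D·((v₀ r)'(0) + (v₁ r)'(0))` tends to `ρ·D·c/L` as `r → 0⁺`. -/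
theorem insect_flux_slow_switching_limit
    (L D c ρ : ℝ) (hL : 0 < L) (hD : 0 < D) (hc : 0 < c) (hρ : ρ ∈ Set.Ioo (0:ℝ) 1)
    (v₀ v₁ : ℝ → ℝ → ℝ)
    (hreg : ∀ r > (0:ℝ), ∃ a b : ℝ, a < 0 ∧ L < b ∧
      ContDiffOn ℝ 2 (v₀ r) (Set.Ioo a b) ∧ ContDiffOn ℝ 2 (v₁ r) (Set.Ioo a b))
    (hode0 : ∀ r > (0:ℝ), ∀ x ∈ Set.Icc (0:ℝ) L,
      D * deriv (deriv (v₀ r)) x = (1 - ρ) * r * v₀ r x - ρ * r * v₁ r x)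
    (hode1 : ∀ r > (0:ℝ), ∀ x ∈ Set.Icc (0:ℝ) L,
      D * deriv (deriv (v₁ r)) x = ρ * r * v₁ r x - (1 - ρ) * r * v₀ r x)
    (hbc0 : ∀ r > (0:ℝ), v₀ r 0 = 0) (hbc1 : ∀ r > (0:ℝ), v₁ r 0 = 0)
    (hbc2 : ∀ r > (0:ℝ), deriv (v₁ r) L = 0) (hbc3 : ∀ r > (0:ℝ), v₀ r L = ρ * c) :
    Filter.Tendsto (fun r => D * (deriv (v₀ r) 0 + deriv (v₁ r) 0))
      (nhdsWithin 0 (Set.Ioi 0)) (nhds (ρ * D * c / L)) := by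
  obtain ⟨hρ0, hρ1⟩ := hρ
  have hev : ∀ᶠ r in nhdsWithin 0 (Set.Ioi 0),
      D*ρ*c*(Real.sqrt (r/D) * Real.cosh (Real.sqrt (r/D) * L)) /
        (ρ*L*Real.sqrt (r/D)*Real.cosh (Real.sqrt (r/D)*L)
          + (1-ρ)*Real.sinh (Real.sqrt (r/D)*L))
      = D * (deriv (v₀ r) 0 + deriv (v₁ r) 0) := by
    refine eventually_mem_nhdsWithin.mono (fun r hr => ?_)
    have hr' : (0:ℝ) < r := hr
    obtain ⟨a, b, ha, hb, h0, h1⟩ := hreg r hr'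
    exact (flux_formula L D c ρ r hL hD hρ0 hρ1 hr' (v₀ r) (v₁ r) a b ha hb h0 h1
      (hode0 r hr') (hode1 r hr') (hbc0 r hr') (hbc1 r hr') (hbc2 r hr')
      (hbc3 r hr')).symm
  exact (flux_tendsto L D c ρ hL hD hρ0 hρ1).congr' hev
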